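/- The n-dimensional Moler matrix is positive definite, i.e., x^T A x > 0 for every nonzero vector x in R^n. -/

import Mathlib

open Matrix

noncomputable def molerMat (n : ℕ) : Matrix (Fin n) (Fin n) ℝ :=
  fun i j => if i = j then ((i : ℕ) + 1 : ℝ) else (((min (i : ℕ) (j : ℕ) : ℝ) + 1) - 2)

noncomputable def molerU (n : ℕ) : Matrix (Fin n) (Fin n) ℝ :=
  fun i j => if i = j then 1 else if i < j then -1 else 0

lemma molerU_sum_lt {n : ℕ} (i j : Fin n) (hij : i < j) :
    ∑ k, molerU n k i * molerU n k j = (i : ℝ) - 1 := by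
  have : ∀ k : Fin n, molerU n k i * molerU n k j
      = (if k < i then (1:ℝ) else 0) + (if k = i then (-1:ℝ) else 0) := by
    intro k
    unfold molerU
    rcases lt_trichotomy k i with h | h | h
    · simp [h, h.ne, (h.trans hij).ne, h.trans hij, h.not_gt]
    · subst h; simp [hij, hij.ne]
    · simp [h.ne', h.not_gt]
  rw [Finset.sum_congr rfl (fun k _ => this k), Finset.sum_add_distrib]
  have h1 : ∑ k : Fin n, (if k < i then (1:ℝ) else 0) = (i : ℝ) := by
    rw [Finset.sum_ite, Finset.sum_const, Finset.sum_const]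
    have he : Finset.filter (fun x => x < i) Finset.univ = Finset.Iio i := by
      ext k; simp
    simp [he, Fin.card_Iio]
  have h2 : ∑ k : Fin n, (if k = i then (-1:ℝ) else 0) = -1 := by
    simp [Finset.sum_ite_eq']
  rw [h1, h2]; ring

lemma molerMat_eq (n : ℕ) : molerMat n = (molerU n)ᵀ * molerU n := by
  ext i j
  rw [mul_apply]
  simp only [transpose_apply]
  rcases lt_trichotomy i j with h | h | h
  · rw [molerU_sum_lt i j h]
    have hm : min ((i:ℕ):ℝ) ((j:ℕ):ℝ) = ((i:ℕ):ℝ) :=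
      min_eq_left (by exact_mod_cast Nat.le_of_lt h)
    simp [molerMat, h.ne, hm]
    ring
  · subst h
    have : ∀ k : Fin n, molerU n k i * molerU n k i = (if k ≤ i then (1:ℝ) else 0) := by
      intro k
      unfold molerU
      rcases lt_trichotomy k i with h | h | h
      · simp [h.ne, h, h.le]
      · subst h; simp
      · simp [h.ne', h.not_gt, h.not_ge]
    rw [Finset.sum_congr rfl (fun k _ => this k), Finset.sum_ite, Finset.sum_const,
      Finset.sum_const]
    have he : Finset.filter (fun x => x ≤ i) Finset.univ = Finset.Iic i := by
      ext k; simp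
    simp [molerMat, he, Fin.card_Iic]
  · have hsum : ∑ k, molerU n k i * molerU n k j = (j : ℝ) - 1 := by
      have := molerU_sum_lt j i h
      rw [← this]
      exact Finset.sum_congr rfl (fun k _ => mul_comm _ _)
    rw [hsum]
    have hm : min ((i:ℕ):ℝ) ((j:ℕ):ℝ) = ((j:ℕ):ℝ) :=
      min_eq_right (by exact_mod_cast Nat.le_of_lt h)
    simp [molerMat, h.ne', hm]
    ring

lemma molerU_det (n : ℕ) : (molerU n).det = 1 := by
  rw [Matrix.det_of_upperTriangular]
  · simp [molerU]
  · intro i j hji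
    simp only [id] at hji
    simp [molerU, hji.not_gt, (hji.ne).symm, hji.ne']

theorem moler_posDef (n : ℕ) (x : Fin n → ℝ) (hx : x ≠ 0) :
    0 < x ⬝ᵥ (molerMat n).mulVec x := by
  rw [molerMat_eq]
  rw [← mulVec_mulVec, dotProduct_mulVec, vecMul_transpose]
  have hy : molerU n *ᵥ x ≠ 0 := by
    intro h
    apply hx
    have hinj : Function.Injective ((molerU n).mulVec) := by
      rw [mulVec_injective_iff_isUnit, isUnit_iff_isUnit_det, molerU_det]
      exact isUnit_one
    have := hinj (by rw [h, mulVec_zero] : molerU n *ᵥ x = molerU n *ᵥ 0)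
    exact this
  have := dotProduct_self_eq_zero (v := molerU n *ᵥ x)
  rcases lt_or_eq_of_le (Finset.sum_nonneg fun k _ => mul_self_nonneg _ :
      (0:ℝ) ≤ (molerU n *ᵥ x) ⬝ᵥ (molerU n *ᵥ x)) with h | h
  · exact h
  · exact absurd (this.mp h.symm) hy
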